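/- arXiv:1505.05003 — 2 statements merged into one kernel-verified Lean document; each statement's English description precedes it below -/
import Mathlib

section
/- Pinching-based feasibility step: Let x ∈ ℝ^d and let T_x = {xzᵀ + zxᵀ : z ∈ ℝ^d} ⊆ 𝓗_d. If X ⪰ 0 is positive semidefinite with trace(X) = ‖x‖² and Δ := X − xxᵀ, then trace(Δ_{T_x}) + ‖Δ_{T_x^⊥}‖_* ≤ 0, where Δ_{T_x} and Δ_{T_x^⊥} are the orthogonal projections of Δ onto T_x and its orthogonal complement, and ‖·‖_* is the nuclear norm. -/
open Matrix

/-- The nuclear norm of a real square matrix: the sum of its singular values. -/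
noncomputable def nuclearNorm {d : ℕ} (A : Matrix (Fin d) (Fin d) ℝ) : ℝ :=
  ∑ i, Real.sqrt ((Matrix.isHermitian_conjTranspose_mul_self A).eigenvalues i)

open scoped MatrixOrder in
lemma nuclearNorm_of_posSemidef {d : ℕ} {A : Matrix (Fin d) (Fin d) ℝ} (hA : A.PosSemidef) :
    nuclearNorm A = A.trace := by
  have hB := Matrix.isHermitian_conjTranspose_mul_self A
  have hAA : Aᴴ * A = A * A := by rw [hA.1.eq]
  have hsq : CFC.sqrt (Aᴴ * A) = A := by
    rw [hAA]; exact CFC.sqrt_mul_self A hA.nonneg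
  have hc : CFC.sqrt (Aᴴ * A) = cfc Real.sqrt (Aᴴ * A) := by
    rw [CFC.sqrt_eq_real_sqrt _ (Matrix.posSemidef_conjTranspose_mul_self A).nonneg]
    exact cfcₙ_eq_cfc (hf0 := Real.sqrt_zero)
  have htr : (cfc Real.sqrt (Aᴴ * A)).trace = ∑ i, Real.sqrt (hB.eigenvalues i) := by
    rw [hB.cfc_eq, Matrix.IsHermitian.cfc, Unitary.conjStarAlgAut_apply, Matrix.trace_mul_cycle]
    rw [show (star hB.eigenvectorUnitary.1 : Matrix (Fin d) (Fin d) ℝ) * hB.eigenvectorUnitary.1 = 1 from hB.eigenvectorUnitary.2.1]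
    rw [one_mul, Matrix.trace_diagonal]
    simp
  have h0 : nuclearNorm A = ∑ i, Real.sqrt (hB.eigenvalues i) := rfl
  rw [h0, ← htr, ← hc, hsq]

/-- Pinching-based feasibility step: for `x ∈ ℝ^d`, `T_x = {xzᵀ + zxᵀ : z}`, and `X ⪰ 0` with
`trace X = ‖x‖²`, writing `Δ = X − xxᵀ = Δ₁ + Δ₂` with `Δ₁ ∈ T_x` and `Δ₂ ⊥ T_x`
(so `Δ₁ = Δ_{T_x}` and `Δ₂ = Δ_{T_x^⊥}`), one has `trace(Δ₁) + ‖Δ₂‖_* ≤ 0`. -/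
theorem pinching_feasibility_step
    {d : ℕ} (x : Fin d → ℝ) (X Δ₁ Δ₂ : Matrix (Fin d) (Fin d) ℝ)
    (hX : X.PosSemidef) (htr : X.trace = ∑ i, x i ^ 2)
    (hdecomp : Δ₁ + Δ₂ = X - vecMulVec x x)
    (hΔ₁ : ∃ z : Fin d → ℝ, Δ₁ = vecMulVec x z + vecMulVec z x)
    (hΔ₂ : ∀ z : Fin d → ℝ, ((vecMulVec x z + vecMulVec z x) * Δ₂).trace = 0) :
    Δ₁.trace + nuclearNorm Δ₂ ≤ 0 := by
  obtain ⟨z, hz⟩ := hΔ₁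
  have hXsym : Xᵀ = X := by
    have := hX.1
    rwa [Matrix.IsHermitian, Matrix.conjTranspose_eq_transpose_of_trivial] at this
  have hΔ₂eq : Δ₂ = X - vecMulVec x x - Δ₁ := by
    rw [← hdecomp]; abel
  have hsym : Δ₂ᵀ = Δ₂ := by
    rw [hΔ₂eq, hz]
    ext i j
    simp only [Matrix.transpose_apply, Matrix.sub_apply, Matrix.add_apply,
      Matrix.vecMulVec_apply]
    have hXij : X j i = X i j := congrFun (congrFun hXsym i) j
    rw [hXij]; ring
  -- Δ₂ *ᵥ x = 0
  have hker : Δ₂ *ᵥ x = 0 := by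
    have h := hΔ₂ (Δ₂ *ᵥ x)
    set w := Δ₂ *ᵥ x with hw
    have hexp : ((vecMulVec x w + vecMulVec w x) * Δ₂).trace = 2 * ∑ i, w i * w i := by
      have hsymm : ∀ i j, Δ₂ j i = Δ₂ i j := fun i j => by
        conv_lhs => rw [← hsym]
        rfl
      simp only [Matrix.trace, Matrix.diag, Matrix.add_mul, Matrix.add_apply, Matrix.mul_apply,
        Matrix.vecMulVec_apply]
      have hsplit : ∀ i j : Fin d, (x i * w j + w i * x j) * Δ₂ j i
          = x i * w j * Δ₂ j i + w i * x j * Δ₂ j i := fun i j => by ring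
      simp only [hsplit, Finset.sum_add_distrib]
      have h1 : ∑ i, ∑ j, x i * w j * Δ₂ j i = ∑ i, w i * w i := by
        rw [Finset.sum_comm]
        refine Finset.sum_congr rfl fun j _ => ?_
        have : w j = ∑ i, Δ₂ j i * x i := rfl
        calc ∑ i, x i * w j * Δ₂ j i = w j * ∑ i, Δ₂ j i * x i := by
              rw [Finset.mul_sum]; exact Finset.sum_congr rfl fun i _ => by ring
          _ = w j * w j := by rw [← this]
      have h2 : ∑ i, ∑ j, w i * x j * Δ₂ j i = ∑ i, w i * w i := by
        refine Finset.sum_congr rfl fun i _ => ?_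
        have : w i = ∑ j, Δ₂ i j * x j := rfl
        calc ∑ j, w i * x j * Δ₂ j i = w i * ∑ j, Δ₂ i j * x j := by
              rw [Finset.mul_sum]
              exact Finset.sum_congr rfl fun j _ => by rw [hsymm j i]; ring
          _ = w i * w i := by rw [← this]
      rw [h1, h2]; ring
    rw [hexp] at h
    have hsum : ∑ i, w i * w i = 0 := by linarith
    funext i
    have hnn : ∀ j ∈ Finset.univ, 0 ≤ w j * w j := fun j _ => mul_self_nonneg _
    have := (Finset.sum_eq_zero_iff_of_nonneg hnn).1 hsum i (Finset.mem_univ i)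
    simpa [mul_self_eq_zero] using this
  -- Δ₂ is PSD
  have hpsd : Δ₂.PosSemidef := by
    rw [Matrix.posSemidef_iff_dotProduct_mulVec]
    constructor
    · rw [Matrix.IsHermitian, Matrix.conjTranspose_eq_transpose_of_trivial]; exact hsym
    · intro v
      simp only [RCLike.re_to_real, star_trivial]
      set c : ℝ := (v ⬝ᵥ x) / (x ⬝ᵥ x) with hc
      set w : Fin d → ℝ := v - c • x with hwdef
      have hwx : w ⬝ᵥ x = 0 := by
        rcases eq_or_ne (x ⬝ᵥ x) 0 with h0 | h0
        · have hx0 : x = 0 := by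
            funext i
            have : ∑ i, x i * x i = 0 := h0
            have hnn : ∀ j ∈ Finset.univ, 0 ≤ x j * x j := fun j _ => mul_self_nonneg _
            have := (Finset.sum_eq_zero_iff_of_nonneg hnn).1 this i (Finset.mem_univ i)
            simpa [mul_self_eq_zero] using this
          simp [hx0]
        · simp only [hwdef, sub_dotProduct, smul_dotProduct, hc, smul_eq_mul]
          field_simp
          ring
      have hxw : x ⬝ᵥ w = 0 := by rw [dotProduct_comm]; exact hwx
      have hv : v ⬝ᵥ (Δ₂ *ᵥ v) = w ⬝ᵥ (Δ₂ *ᵥ w) := by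
        have hΔw : Δ₂ *ᵥ v = Δ₂ *ᵥ w := by
          rw [hwdef, Matrix.mulVec_sub, Matrix.mulVec_smul, hker, smul_zero, sub_zero]
        rw [hΔw, hwdef, sub_dotProduct, smul_dotProduct]
        have hxΔw : x ⬝ᵥ (Δ₂ *ᵥ w) = 0 := by
          rw [Matrix.dotProduct_mulVec, ← Matrix.mulVec_transpose, hsym, hker]
          simp
        rw [hxΔw, smul_zero, sub_zero]
      rw [hv, hΔ₂eq, hz]
      have hvmv : ∀ a b : Fin d → ℝ, vecMulVec a b *ᵥ w = (b ⬝ᵥ w) • a := by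
        intro a b
        funext i
        simp only [Matrix.mulVec, Matrix.vecMulVec_apply, dotProduct, Pi.smul_apply,
          smul_eq_mul, Finset.sum_mul]
        exact Finset.sum_congr rfl fun j _ => by ring
      rw [Matrix.sub_mulVec, Matrix.sub_mulVec, Matrix.add_mulVec, hvmv, hvmv, hvmv]
      rw [dotProduct_sub, dotProduct_sub, dotProduct_add]
      rw [dotProduct_smul, dotProduct_smul, dotProduct_smul]
      simp only [hwx, hxw, smul_eq_mul, mul_zero, zero_mul, sub_zero, add_zero, zero_smul]
      have := hX.re_dotProduct_nonneg w
      simpa using this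
  -- trace identity
  have htrsum : Δ₁.trace + Δ₂.trace = 0 := by
    have : (Δ₁ + Δ₂).trace = (X - vecMulVec x x).trace := by rw [hdecomp]
    rw [Matrix.trace_add, Matrix.trace_sub, htr] at this
    have hvv : (vecMulVec x x).trace = ∑ i, x i ^ 2 := by
      simp [Matrix.trace, Matrix.diag, Matrix.vecMulVec_apply, pow_two]
    rw [hvv] at this
    linarith
  rw [nuclearNorm_of_posSemidef hpsd]
  linarith
end

section
/- Moment bound on the Grassmannian: For λ = (λ₁,…,λ_d) with 1 ≥ λ₁ ≥ … ≥ λ_k > 0 = λ_{k+1} = … = λ_d, P = O D_λ Oᵀ with O Haar-distributed on O(d), and any unit vector x ∈ ℝ^d, the t-th moment satisfies E[⟨P, xxᵀ⟩^t] ≤ (kt/d)^t. -/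
open Matrix MeasureTheory

noncomputable instance matrixMeasurableSpace (d : ℕ) :
    MeasurableSpace (Matrix (Fin d) (Fin d) ℝ) :=
  (inferInstance : MeasurableSpace (Fin d → Fin d → ℝ))

open Real Filter
open scoped ENNReal NNReal

/-- `n`-th absolute-free moment integrand of the unnormalized standard Gaussian. -/
noncomputable def gm (n : ℕ) : ℝ := ∫ x : ℝ, x ^ n * Real.exp (-(1/2) * x ^ 2)

lemma gm_integrable (n : ℕ) :
    Integrable (fun x : ℝ => x ^ n * Real.exp (-(1/2) * x ^ 2)) := by
  have h := integrable_rpow_mul_exp_neg_mul_sq (b := (1/2 : ℝ)) (by norm_num)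
    (s := (n : ℝ)) ((by norm_num : (-1:ℝ) < 0).trans_le (Nat.cast_nonneg n))
  refine h.congr ?_
  filter_upwards with x
  rw [Real.rpow_natCast]

lemma gm_tendsto_top (n : ℕ) :
    Tendsto (fun x : ℝ => x ^ n * Real.exp (-(1/2) * x ^ 2)) atTop (nhds 0) := by
  have h := rpow_mul_exp_neg_mul_sq_isLittleO_exp_neg (b := (1/2 : ℝ)) (by norm_num) (n : ℝ)
  have h2 : Tendsto (fun x : ℝ => Real.exp (-(1/2) * x)) atTop (nhds 0) := by
    have : Tendsto (fun x : ℝ => -(1/2) * x) atTop atBot := by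
      apply Filter.Tendsto.const_mul_atTop_of_neg (by norm_num) tendsto_id
    exact Real.tendsto_exp_atBot.comp this
  have h3 := h.trans_tendsto h2
  refine h3.congr fun x => ?_
  rw [Real.rpow_natCast]

lemma gm_tendsto_bot (n : ℕ) :
    Tendsto (fun x : ℝ => x ^ n * Real.exp (-(1/2) * x ^ 2)) atBot (nhds 0) := by
  have h : Tendsto (fun x : ℝ => ((-1 : ℝ)) ^ n * (x ^ n * Real.exp (-(1/2) * x ^ 2)))
      atTop (nhds 0) := by
    simpa using (gm_tendsto_top n).const_mul ((-1 : ℝ) ^ n)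
  have h4 := h.comp tendsto_neg_atBot_atTop
  refine h4.congr fun x => ?_
  simp only [Function.comp]
  rw [neg_pow, neg_sq]
  ring_nf
  rw [show ((-1:ℝ) ^ (n * 2)) = 1 by rw [mul_comm n 2, pow_mul]; norm_num]
  ring

lemma gm_rec (n : ℕ) : gm (n + 2) = (n + 1 : ℝ) * gm n := by
  set E : ℝ → ℝ := fun x => Real.exp (-(1/2) * x ^ 2) with hE
  have hderiv : ∀ x : ℝ, HasDerivAt (fun y : ℝ => -(y ^ (n+1) * E y))
      (x ^ (n+2) * E x - (n+1 : ℝ) * (x ^ n * E x)) x := by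
    intro x
    have h1 : HasDerivAt (fun y : ℝ => y ^ (n+1)) ((n+1 : ℝ) * x ^ n) x := by
      simpa using hasDerivAt_pow (n+1) x
    have h2 : HasDerivAt (fun y : ℝ => -(1/2) * y ^ 2) (-(1/2) * (2 * x)) x := by
      simpa using (hasDerivAt_pow 2 x).const_mul (-(1/2) : ℝ)
    have h3 : HasDerivAt E (Real.exp (-(1/2) * x ^ 2) * (-(1/2) * (2 * x))) x := h2.exp
    have h4 := (h1.mul h3).neg
    refine h4.congr_deriv ?_
    simp only [hE]
    ring
  have hint : ∀ m : ℕ, Integrable (fun x : ℝ => x ^ m * E x) := fun m => gm_integrable m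
  have hf' : Integrable (fun x : ℝ => x ^ (n+2) * E x - (n+1 : ℝ) * (x ^ n * E x)) :=
    (hint (n+2)).sub ((hint n).const_mul _)
  have htop : Tendsto (fun x : ℝ => -(x ^ (n+1) * E x)) atTop (nhds 0) := by
    have h0 := (gm_tendsto_top (n+1)).neg
    rw [neg_zero] at h0
    exact h0
  have hbot : Tendsto (fun x : ℝ => -(x ^ (n+1) * E x)) atBot (nhds 0) := by
    have h0 := (gm_tendsto_bot (n+1)).neg
    rw [neg_zero] at h0
    exact h0
  have hIoi : ∫ x in Set.Ioi (0:ℝ), (x ^ (n+2) * E x - (n+1 : ℝ) * (x ^ n * E x))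
      = 0 - -((0:ℝ) ^ (n+1) * E 0) :=
    integral_Ioi_of_hasDerivAt_of_tendsto' (fun x _ => hderiv x) hf'.integrableOn htop
  have hIic : ∫ x in Set.Iic (0:ℝ), (x ^ (n+2) * E x - (n+1 : ℝ) * (x ^ n * E x))
      = -((0:ℝ) ^ (n+1) * E 0) - 0 :=
    integral_Iic_of_hasDerivAt_of_tendsto' (fun x _ => hderiv x) hf'.integrableOn hbot
  have hzero : ∫ x : ℝ, (x ^ (n+2) * E x - (n+1 : ℝ) * (x ^ n * E x)) = 0 := by
    rw [← intervalIntegral.integral_Iic_add_Ioi hf'.integrableOn hf'.integrableOn, hIoi, hIic]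
    ring
  have := integral_sub (hint (n+2)) ((hint n).const_mul (n+1 : ℝ))
  rw [hzero] at this
  have h5 : ∫ x : ℝ, (n+1 : ℝ) * (x ^ n * E x) = (n+1 : ℝ) * ∫ x : ℝ, x ^ n * E x :=
    integral_const_mul _ _
  simp only [gm]
  have := this.symm
  rw [h5] at this
  linarith [this]

lemma gm_zero : gm 0 = Real.sqrt (2 * Real.pi) := by
  simp only [gm, pow_zero, one_mul]
  have := integral_gaussian (1/2 : ℝ)
  rw [show Real.pi / (1/2) = 2 * Real.pi by ring] at this
  simpa using this

lemma gm_zero_pos : 0 < gm 0 := by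
  rw [gm_zero]
  positivity

lemma gm_even (t : ℕ) : gm (2 * t) = (∏ j ∈ Finset.range t, (2 * (j:ℝ) + 1)) * gm 0 := by
  induction t with
  | zero => simp
  | succ t ih =>
    have : 2 * (t + 1) = 2 * t + 2 := by ring
    rw [this, gm_rec, ih, Finset.prod_range_succ]
    push_cast
    ring

lemma odd_prod_le (t : ℕ) : (∏ j ∈ Finset.range t, (2 * (j:ℝ) + 1)) ≤ (t:ℝ) ^ t := by
  induction t with
  | zero => simp
  | succ t ih =>
    rw [Finset.prod_range_succ]
    rcases Nat.eq_zero_or_pos t with rfl | ht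
    · norm_num
    have htpos : (0:ℝ) < t := by exact_mod_cast ht
    have h2 : (2:ℝ) ≤ (1 + 1/(t:ℝ)) ^ t := by
      have := one_add_mul_le_pow (a := 1/(t:ℝ)) (le_trans (by norm_num : (-2:ℝ) ≤ 0) (by positivity)) t
      calc (2:ℝ) = 1 + (t:ℝ) * (1/(t:ℝ)) := by
            rw [mul_one_div, div_self htpos.ne']; norm_num
        _ ≤ (1 + 1/(t:ℝ)) ^ t := this
    have hprodnn : (0:ℝ) ≤ ∏ j ∈ Finset.range t, (2 * (j:ℝ) + 1) :=
      Finset.prod_nonneg fun j _ => by positivity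
    have key : (2 * (t:ℝ) + 1) * (t:ℝ) ^ t ≤ ((t:ℝ) + 1) ^ (t + 1) := by
      have h3 : ((t:ℝ) + 1) ^ (t+1) = ((t:ℝ) + 1) * (((1 + 1/(t:ℝ)) ^ t) * (t:ℝ)^t) := by
        rw [← mul_pow]
        have : (1 + 1/(t:ℝ)) * t = t + 1 := by field_simp
        rw [this, pow_succ]
        ring
      rw [h3]
      have h4 : (2 * (t:ℝ) + 1) ≤ ((t:ℝ) + 1) * 2 := by linarith
      calc (2 * (t:ℝ) + 1) * (t:ℝ) ^ t ≤ (((t:ℝ) + 1) * 2) * (t:ℝ)^t := by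
            apply mul_le_mul_of_nonneg_right h4 (by positivity)
        _ ≤ ((t:ℝ) + 1) * (((1 + 1/(t:ℝ)) ^ t) * (t:ℝ)^t) := by
            rw [mul_assoc]
            apply mul_le_mul_of_nonneg_left _ (by positivity)
            apply mul_le_mul_of_nonneg_right h2 (by positivity)
    calc (∏ j ∈ Finset.range t, (2 * (j:ℝ) + 1)) * (2 * (t:ℝ) + 1)
        ≤ (t:ℝ)^t * (2 * (t:ℝ) + 1) := by
          apply mul_le_mul_of_nonneg_right ih (by positivity)
      _ ≤ ((t:ℝ) + 1) ^ (t+1) := by rw [mul_comm]; exact key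
      _ = ((t+1 : ℕ):ℝ) ^ (t+1) := by push_cast; ring

lemma gm_even_le (t : ℕ) : gm (2 * t) ≤ (t:ℝ) ^ t * gm 0 := by
  rw [gm_even]
  exact mul_le_mul_of_nonneg_right (odd_prod_le t) gm_zero_pos.le

lemma gm_nonneg (n : ℕ) : 0 ≤ gm (2 * n) := by
  rw [gm_even]
  exact mul_nonneg (Finset.prod_nonneg fun j _ => by positivity) gm_zero_pos.le

lemma gm_two : gm 2 = gm 0 := by
  have := gm_even 1
  simpa using this

/-- unnormalized standard Gaussian measure on `Fin d → ℝ`. -/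
noncomputable def gmeas (d : ℕ) : Measure (Fin d → ℝ) :=
  volume.withDensity (fun v => ((Real.toNNReal (∏ i, Real.exp (-(1/2) * (v i) ^ 2))) : ℝ≥0∞))

lemma gdens_meas (d : ℕ) :
    Measurable (fun v : Fin d → ℝ => ∏ i, Real.exp (-(1/2) * (v i) ^ 2)) := by
  apply Finset.measurable_prod
  intro i _
  exact Real.measurable_exp.comp (((measurable_pi_apply i).pow_const 2).const_mul _)

lemma gdensNN_meas (d : ℕ) :
    Measurable (fun v : Fin d → ℝ => Real.toNNReal (∏ i, Real.exp (-(1/2) * (v i) ^ 2))) :=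
  (gdens_meas d).real_toNNReal

lemma gmeas_integral {d : ℕ} (f : (Fin d → ℝ) → ℝ) :
    ∫ v, f v ∂(gmeas d) = ∫ v, (∏ i, Real.exp (-(1/2) * (v i) ^ 2)) * f v := by
  rw [gmeas, integral_withDensity_eq_integral_smul (gdensNN_meas d) f]
  congr 1
  funext v
  rw [NNReal.smul_def, Real.coe_toNNReal _ (Finset.prod_nonneg fun i _ => (Real.exp_pos _).le),
    smul_eq_mul]

lemma gmeas_integrable_iff {d : ℕ} (f : (Fin d → ℝ) → ℝ) :
    Integrable f (gmeas d) ↔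
      Integrable (fun v => (∏ i, Real.exp (-(1/2) * (v i) ^ 2)) * f v) volume := by
  have hfun : (fun v : Fin d → ℝ =>
      (Real.toNNReal (∏ i, Real.exp (-(1/2) * (v i) ^ 2))) • f v)
      = fun v => (∏ i, Real.exp (-(1/2) * (v i) ^ 2)) * f v := by
    funext v
    rw [NNReal.smul_def, Real.coe_toNNReal _ (Finset.prod_nonneg fun i _ => (Real.exp_pos _).le),
      smul_eq_mul]
  rw [gmeas, integrable_withDensity_iff_integrable_smul (gdensNN_meas d), hfun]

lemma gmeas_integral_pi {d : ℕ} (f : Fin d → ℝ → ℝ) :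
    ∫ v, ∏ i, f i (v i) ∂(gmeas d) = ∏ i, ∫ x : ℝ, f i x * Real.exp (-(1/2) * x ^ 2) := by
  rw [gmeas_integral]
  have : (fun v : Fin d → ℝ => (∏ i, Real.exp (-(1/2) * (v i) ^ 2)) * ∏ i, f i (v i))
      = fun v : Fin d → ℝ => ∏ i, (fun x : ℝ => f i x * Real.exp (-(1/2) * x ^ 2)) (v i) := by
    funext v
    rw [← Finset.prod_mul_distrib]
    apply Finset.prod_congr rfl
    intro i _
    ring
  rw [this]
  exact MeasureTheory.integral_fintype_prod_eq_prod (𝕜 := ℝ)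
    (fun i x => f i x * Real.exp (-(1/2) * x ^ 2))

lemma gmeas_integrable_pi {d : ℕ} (f : Fin d → ℝ → ℝ)
    (hf : ∀ i, Integrable (fun x : ℝ => f i x * Real.exp (-(1/2) * x ^ 2))) :
    Integrable (fun v => ∏ i, f i (v i)) (gmeas d) := by
  rw [gmeas_integrable_iff]
  have : (fun v : Fin d → ℝ => (∏ i, Real.exp (-(1/2) * (v i) ^ 2)) * ∏ i, f i (v i))
      = fun v : Fin d → ℝ => ∏ i, (fun x : ℝ => f i x * Real.exp (-(1/2) * x ^ 2)) (v i) := by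
    funext v
    rw [← Finset.prod_mul_distrib]
    exact Finset.prod_congr rfl fun i _ => by ring
  rw [this]
  exact MeasureTheory.Integrable.fintype_prod (𝕜 := ℝ) hf

lemma gmeas_moment {d : ℕ} (e : Fin d → ℕ) :
    ∫ v, ∏ i, (v i) ^ (e i) ∂(gmeas d) = ∏ i, gm (e i) := by
  exact gmeas_integral_pi (fun i x => x ^ (e i))

lemma gmeas_moment_integrable {d : ℕ} (e : Fin d → ℕ) :
    Integrable (fun v => ∏ i, (v i) ^ (e i)) (gmeas d) :=
  gmeas_integrable_pi _ fun i => gm_integrable (e i)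

lemma gmeas_univ {d : ℕ} : (gmeas d) Set.univ = ENNReal.ofReal (gm 0 ^ d) := by
  rw [gmeas, withDensity_apply _ MeasurableSet.univ, Measure.restrict_univ]
  have h1 : ∀ v : Fin d → ℝ,
      ((Real.toNNReal (∏ i, Real.exp (-(1/2) * (v i) ^ 2))) : ℝ≥0∞)
        = ENNReal.ofReal (∏ i, Real.exp (-(1/2) * (v i) ^ 2)) := fun v => rfl
  simp_rw [h1]
  rw [← MeasureTheory.ofReal_integral_eq_lintegral_ofReal]
  · congr 1
    have h2 : ∀ v : Fin d → ℝ, (∏ i, Real.exp (-(1/2) * (v i) ^ 2))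
        = ∏ i, (fun x : ℝ => 1 * Real.exp (-(1/2) * x ^ 2)) (v i) := by
      intro v; exact Finset.prod_congr rfl fun i _ => by ring
    simp_rw [h2]
    rw [MeasureTheory.volume_pi, MeasureTheory.integral_fintype_prod_eq_pow (𝕜 := ℝ)
      (fun x : ℝ => 1 * Real.exp (-(1/2) * x ^ 2))]
    have h3 : (∫ x : ℝ, 1 * Real.exp (-(1/2) * x ^ 2)) = gm 0 := by
      unfold gm
      norm_num
    rw [h3, Fintype.card_fin]
  · have := MeasureTheory.Integrable.fintype_prod (𝕜 := ℝ) (ι := Fin d)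
      (f := fun _ x => 1 * Real.exp (-(1/2) * x ^ 2)) (fun i => by simpa using gm_integrable 0)
    refine this.congr (Filter.Eventually.of_forall fun v => ?_)
    exact (Finset.prod_congr rfl fun i _ => by ring)
  · exact Filter.Eventually.of_forall fun v =>
      Finset.prod_nonneg fun i _ => (Real.exp_pos _).le

instance gmeas_finite {d : ℕ} : IsFiniteMeasure (gmeas d) :=
  ⟨by rw [gmeas_univ]; exact ENNReal.ofReal_lt_top⟩

instance gmeas_nezero {d : ℕ} : NeZero (gmeas d) := by
  constructor
  intro h
  have := gmeas_univ (d := d)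
  rw [h] at this
  simp only [Measure.coe_zero, Pi.zero_apply] at this
  have h2 : ENNReal.ofReal (gm 0 ^ d) = 0 := this.symm
  rw [ENNReal.ofReal_eq_zero] at h2
  linarith [pow_pos gm_zero_pos d]

lemma measurable_mulVec {d : ℕ} (M : Matrix (Fin d) (Fin d) ℝ) :
    Measurable (fun v : Fin d → ℝ => M.mulVec v) := by
  apply measurable_pi_lambda
  intro i
  simp only [Matrix.mulVec, dotProduct]
  exact Finset.measurable_sum _ fun j _ => (measurable_pi_apply j).const_mul _

lemma sum_sq_mulVec {d : ℕ} (M : Matrix (Fin d) (Fin d) ℝ) (h : Mᵀ * M = 1) (v : Fin d → ℝ) :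
    ∑ i, (M.mulVec v i) ^ 2 = ∑ i, (v i) ^ 2 := by
  have key : ∀ j l, (∑ i, M i j * M i l) = (1 : Matrix (Fin d) (Fin d) ℝ) j l := by
    intro j l
    rw [← h]
    simp [Matrix.mul_apply, Matrix.transpose_apply]
  calc ∑ i, (M.mulVec v i) ^ 2
      = ∑ i, ∑ j, ∑ l, (M i j * v j) * (M i l * v l) := by
        apply Finset.sum_congr rfl
        intro i _
        rw [sq]
        simp only [Matrix.mulVec, dotProduct]
        rw [Finset.sum_mul_sum]
    _ = ∑ j, ∑ l, (v j * v l) * ∑ i, M i j * M i l := by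
        rw [Finset.sum_comm]
        apply Finset.sum_congr rfl
        intro j _
        rw [Finset.sum_comm]
        apply Finset.sum_congr rfl
        intro l _
        rw [Finset.mul_sum]
        apply Finset.sum_congr rfl
        intro i _
        ring
    _ = ∑ j, (v j) ^ 2 := by
        apply Finset.sum_congr rfl
        intro j _
        simp_rw [key, Matrix.one_apply]
        simp [mul_ite, Finset.sum_ite_eq, sq]

lemma gmeas_map {d : ℕ} (M : Matrix (Fin d) (Fin d) ℝ) (h : Mᵀ * M = 1) :
    Measure.map (fun v => M.mulVec v) (gmeas d) = gmeas d := by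
  have hdet2 : M.det * M.det = 1 := by
    have := congrArg Matrix.det h
    rwa [Matrix.det_mul, Matrix.det_transpose, Matrix.det_one] at this
  have hdetne : M.det ≠ 0 := by
    intro h0
    rw [h0, zero_mul] at hdet2
    exact zero_ne_one hdet2
  have habs : |M.det| = 1 := by
    rcases mul_self_eq_one_iff.1 hdet2 with h1 | h1 <;> simp [h1]
  have hvol : Measure.map (fun v => M.mulVec v) (volume : Measure (Fin d → ℝ)) = volume := by
    have h2 := Real.map_matrix_volume_pi_eq_smul_volume_pi (M := M) hdetne
    have h3 : (fun v : Fin d → ℝ => M.mulVec v) = ⇑(Matrix.toLin' M) := by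
      funext v
      rw [Matrix.toLin'_apply]
    rw [h3, h2, abs_inv, habs]
    simp
  have hdensinv : ∀ v : Fin d → ℝ,
      Real.toNNReal (∏ i, Real.exp (-(1/2) * ((M.mulVec v) i) ^ 2))
        = Real.toNNReal (∏ i, Real.exp (-(1/2) * (v i) ^ 2)) := by
    intro v
    congr 1
    rw [← Real.exp_sum, ← Real.exp_sum]
    congr 1
    rw [← Finset.mul_sum, ← Finset.mul_sum, sum_sq_mulVec M h v]
  ext s hs
  rw [Measure.map_apply (measurable_mulVec M) hs, gmeas,
    withDensity_apply _ ((measurable_mulVec M) hs), withDensity_apply _ hs]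
  conv_rhs => rw [← hvol]
  rw [setLIntegral_map hs ((gdensNN_meas d).coe_nnreal_ennreal) (measurable_mulVec M)]
  apply lintegral_congr_ae
  apply Filter.Eventually.of_forall
  intro v
  exact (congrArg (fun r : ℝ≥0 => (r : ℝ≥0∞)) (hdensinv v)).symm


lemma trace_quad {d : ℕ} (A : Matrix (Fin d) (Fin d) ℝ) (lam : Fin d → ℝ) (x : Fin d → ℝ) :
    ((A * diagonal lam * Aᵀ) * vecMulVec x x).trace
      = ∑ l, lam l * (∑ i, A i l * x i) ^ 2 := by
  have h1 : ((A * diagonal lam * Aᵀ) * vecMulVec x x).trace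
      = ∑ i, ∑ j, (A * diagonal lam * Aᵀ) i j * (x j * x i) := by
    simp [Matrix.trace, Matrix.diag, Matrix.mul_apply, Matrix.vecMulVec_apply]
  have h2 : ∀ i j, (A * diagonal lam * Aᵀ) i j = ∑ l, A i l * lam l * A j l := by
    intro i j
    rw [Matrix.mul_apply]
    apply Finset.sum_congr rfl
    intro l _
    rw [Matrix.mul_diagonal, Matrix.transpose_apply]
  rw [h1]
  simp_rw [h2, Finset.sum_mul]
  calc ∑ i : Fin d, ∑ j : Fin d, ∑ l : Fin d, A i l * lam l * A j l * (x j * x i)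
      = ∑ i : Fin d, ∑ l : Fin d, ∑ j : Fin d, A i l * lam l * A j l * (x j * x i) := by
        exact Finset.sum_congr rfl fun i _ => Finset.sum_comm
    _ = ∑ l : Fin d, ∑ i : Fin d, ∑ j : Fin d, A i l * lam l * A j l * (x j * x i) :=
        Finset.sum_comm
    _ = ∑ l, lam l * (∑ i, A i l * x i) ^ 2 := by
        apply Finset.sum_congr rfl
        intro l _
        rw [sq, Finset.sum_mul_sum, Finset.mul_sum]
        apply Finset.sum_congr rfl
        intro i _
        rw [Finset.mul_sum]
        apply Finset.sum_congr rfl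
        intro j _
        ring

lemma vecMulVec_sq {d : ℕ} (w : Fin d → ℝ) :
    vecMulVec w w * vecMulVec w w = (∑ i, w i ^ 2) • vecMulVec w w := by
  ext i j
  simp only [Matrix.mul_apply, Matrix.vecMulVec_apply, Matrix.smul_apply, smul_eq_mul,
    Finset.sum_mul]
  apply Finset.sum_congr rfl
  intro l _
  ring

lemma vecMulVec_mulVec' {d : ℕ} (w a : Fin d → ℝ) :
    (vecMulVec w w).mulVec a = (∑ j, w j * a j) • w := by
  funext i
  simp only [Matrix.mulVec, dotProduct, Matrix.vecMulVec_apply, Pi.smul_apply,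
    smul_eq_mul, Finset.sum_mul]
  apply Finset.sum_congr rfl
  intro j _
  ring

lemma exists_orth_mulVec {d : ℕ} (a b : Fin d → ℝ) (ha : ∑ i, a i ^ 2 = 1) (hb : ∑ i, b i ^ 2 = 1) :
    ∃ Q : Matrix (Fin d) (Fin d) ℝ, Qᵀ * Q = 1 ∧ Q.mulVec a = b := by
  by_cases h : ∑ i, (a i - b i) ^ 2 = 0
  · have hab : a = b := by
      funext i
      have h0 : (a i - b i) ^ 2 = 0 :=
        (Finset.sum_eq_zero_iff_of_nonneg
          (fun j _ => sq_nonneg (a j - b j))).mp h i (Finset.mem_univ i)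
      have := sq_eq_zero_iff.mp h0
      linarith
    exact ⟨1, by simp, by rw [hab, Matrix.one_mulVec]⟩
  · set w : Fin d → ℝ := fun i => a i - b i with hw
    set c : ℝ := ∑ i, w i ^ 2 with hc
    set p : ℝ := ∑ i, w i * a i with hp
    have hcpos : 0 < c := by
      rcases (Finset.sum_nonneg fun i (_ : i ∈ Finset.univ) => sq_nonneg (w i)).lt_or_eq
        with h1 | h1
      · exact h1
      · exact absurd h1.symm h
    have hc2p : c = 2 * p := by
      have e1 : c - 2 * p = ∑ i, ((w i) ^ 2 - 2 * (w i * a i)) := by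
        rw [Finset.sum_sub_distrib, ← Finset.mul_sum]
      have e2 : ∑ i, ((w i) ^ 2 - 2 * (w i * a i)) = ∑ i, ((b i) ^ 2 - (a i) ^ 2) := by
        apply Finset.sum_congr rfl
        intro i _
        simp only [hw]
        ring
      have e3 : ∑ i, ((b i) ^ 2 - (a i) ^ 2) = 0 := by
        rw [Finset.sum_sub_distrib, ha, hb]
        ring
      have := e1.trans (e2.trans e3)
      linarith
    set s : ℝ := 2 / c with hs
    set V : Matrix (Fin d) (Fin d) ℝ := vecMulVec w w with hV
    have hVV : V * V = c • V := by
      rw [hV, hc]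
      exact vecMulVec_sq w
    refine ⟨1 - s • V, ?_, ?_⟩
    · have hsymm : (1 - s • V)ᵀ = 1 - s • V := by
        have : Vᵀ = V := by
          rw [hV]
          ext i j
          simp only [Matrix.transpose_apply, Matrix.vecMulVec_apply]
          ring
        rw [Matrix.transpose_sub, Matrix.transpose_one, Matrix.transpose_smul, this]
      rw [hsymm]
      rw [sub_mul, one_mul, mul_sub, mul_one, smul_mul_assoc, mul_smul_comm, smul_smul,
        hVV, smul_smul]
      have hssc : s * s * c = s + s := by
        rw [hs]
        field_simp
        ring
      rw [hssc, add_smul]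
      abel
    · rw [Matrix.sub_mulVec, Matrix.one_mulVec, Matrix.smul_mulVec, hV,
        vecMulVec_mulVec', ← hp, smul_smul]
      have hsp : s * p = 1 := by
        have hppos : p ≠ 0 := by
          intro h0
          rw [h0, mul_zero] at hc2p
          exact (hcpos.ne' hc2p)
        rw [hs, hc2p]
        field_simp
      rw [hsp, one_smul]
      funext i
      simp only [Pi.sub_apply, hw]
      ring

set_option maxHeartbeats 1000000 in
/-- Moment bound on the Grassmannian: for `λ` with `1 ≥ λ₁ ≥ … ≥ λ_k > 0 = λ_{k+1} = … = λ_d`,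
`P = O D_λ Oᵀ` with `O` Haar-distributed on `O(d)`, and any unit vector `x ∈ ℝ^d`,
`E[⟨P,xxᵀ⟩^t] ≤ (kt/d)^t`. -/
theorem grassmannian_moment_bound
    {Ω : Type*} [MeasurableSpace Ω] (μ : Measure Ω) [IsProbabilityMeasure μ]
    {d k : ℕ} (hk : 1 ≤ k) (hkd : k ≤ d)
    (lam : Fin d → ℝ)
    (hmono : ∀ i j : Fin d, i ≤ j → lam j ≤ lam i)
    (hle1 : ∀ i : Fin d, lam i ≤ 1)
    (hpos : ∀ i : Fin d, (i : ℕ) < k → 0 < lam i)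
    (hzero : ∀ i : Fin d, k ≤ (i : ℕ) → lam i = 0)
    (O : Ω → Matrix (Fin d) (Fin d) ℝ) (hOmeas : Measurable O)
    (hOrth : ∀ ω, (O ω)ᵀ * O ω = 1)
    (hHaar : ∀ Q : Matrix (Fin d) (Fin d) ℝ, Qᵀ * Q = 1 →
      Measure.map (fun ω => Q * O ω) μ = Measure.map O μ)
    (x : Fin d → ℝ) (hx : ∑ i, x i ^ 2 = 1) (t : ℕ) (ht : 1 ≤ t) :
    ∫ ω, ((O ω * diagonal lam * (O ω)ᵀ) * vecMulVec x x).trace ^ t ∂μ ≤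
      ((k : ℝ) * t / d) ^ t := by
  classical
  have hd : 0 < d := lt_of_lt_of_le hk hkd
  have hdR : (0:ℝ) < (d:ℝ) := by exact_mod_cast hd
  have hkR : (0:ℝ) < (k:ℝ) := by exact_mod_cast hk
  have htne : t ≠ 0 := by omega
  have hO2 : ∀ ω, O ω * (O ω)ᵀ = 1 := fun ω => mul_eq_one_comm.mp (hOrth ω)
  have hOT : ∀ ω, ((O ω)ᵀ)ᵀ * (O ω)ᵀ = 1 := fun ω => by
    rw [Matrix.transpose_transpose]; exact hO2 ω
  set p : Fin d → ℝ := fun l => if (l : ℕ) < k then 1 else 0 with hp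
  have hp_nonneg : ∀ l, 0 ≤ p l := fun l => by
    by_cases h : (l:ℕ) < k <;> simp [hp, h]
  have hp_le_one : ∀ l, p l ≤ 1 := fun l => by
    by_cases h : (l:ℕ) < k <;> simp [hp, h]
  set φ : (Fin d → ℝ) → ℝ := fun y => (∑ l, p l * (y l) ^ 2) ^ t with hφ
  have hφapp : ∀ y, φ y = (∑ l, p l * (y l) ^ 2) ^ t := fun y => rfl
  have hφmeas : Measurable φ := by
    apply Measurable.pow_const
    apply Finset.measurable_sum
    intro l _
    exact ((measurable_pi_apply l).pow_const 2).const_mul _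
  have hφ_nonneg : ∀ y, 0 ≤ φ y := by
    intro y
    exact pow_nonneg (Finset.sum_nonneg fun l _ => mul_nonneg (hp_nonneg l) (sq_nonneg _)) t
  have hφ_le_normpow : ∀ y : Fin d → ℝ, φ y ≤ (∑ i, y i ^ 2) ^ t := by
    intro y
    rw [hφapp]
    apply pow_le_pow_left₀
      (Finset.sum_nonneg fun l _ => mul_nonneg (hp_nonneg l) (sq_nonneg _))
    exact Finset.sum_le_sum fun l _ => mul_le_of_le_one_left (sq_nonneg _) (hp_le_one l)
  have hφ_le : ∀ (M : Matrix (Fin d) (Fin d) ℝ), Mᵀ * M = 1 → ∀ v : Fin d → ℝ,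
      φ (M.mulVec v) ≤ (∑ i, v i ^ 2) ^ t := by
    intro M hM v
    have := hφ_le_normpow (M.mulVec v)
    rwa [sum_sq_mulVec M hM v] at this
  have hentry : ∀ (i l : Fin d), Measurable (fun M : Matrix (Fin d) (Fin d) ℝ => M i l) := by
    intro i l
    have h1 : Measurable (fun M : Fin d → Fin d → ℝ => M i l) :=
      (measurable_pi_apply l).comp (measurable_pi_apply i)
    exact h1
  have hmulVecT : ∀ (u : Fin d → ℝ),
      Measurable (fun M : Matrix (Fin d) (Fin d) ℝ => Mᵀ.mulVec u) := by
    intro u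
    apply measurable_pi_lambda
    intro l
    simp only [Matrix.mulVec, dotProduct, Matrix.transpose_apply]
    apply Finset.measurable_sum
    intro i _
    exact (hentry i l).mul_const (u i)
  have hgω : ∀ (u : Fin d → ℝ), Measurable (fun ω => φ ((O ω)ᵀ.mulVec u)) :=
    fun u => hφmeas.comp ((hmulVecT u).comp hOmeas)
  -- the trace rewriting
  have hy : ∀ (A : Matrix (Fin d) (Fin d) ℝ) (l : Fin d),
      (Aᵀ.mulVec x) l = ∑ i, A i l * x i := by
    intro A l
    simp [Matrix.mulVec, dotProduct, Matrix.transpose_apply]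
  have htrace : ∀ ω, ((O ω * diagonal lam * (O ω)ᵀ) * vecMulVec x x).trace
      = ∑ l, lam l * (((O ω)ᵀ.mulVec x) l) ^ 2 := by
    intro ω
    rw [trace_quad]
    exact Finset.sum_congr rfl fun l _ => by rw [hy]
  have hlam_nonneg : ∀ l, 0 ≤ lam l := by
    intro l
    rcases lt_or_ge ((l:ℕ)) k with h | h
    · exact (hpos l h).le
    · rw [hzero l h]
  have hlam_le_p : ∀ l, lam l ≤ p l := by
    intro l
    rcases lt_or_ge ((l:ℕ)) k with h | h
    · simpa [hp, h] using hle1 l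
    · rw [hzero l h]
      exact hp_nonneg l
  have hptwise : ∀ ω, ((O ω * diagonal lam * (O ω)ᵀ) * vecMulVec x x).trace ^ t
      ≤ φ ((O ω)ᵀ.mulVec x) := by
    intro ω
    rw [htrace ω, hφapp]
    apply pow_le_pow_left₀
      (Finset.sum_nonneg fun l _ => mul_nonneg (hlam_nonneg l) (sq_nonneg _))
    exact Finset.sum_le_sum fun l _ =>
      mul_le_mul_of_nonneg_right (hlam_le_p l) (sq_nonneg _)
  have htrace_nonneg : ∀ ω, 0 ≤ ((O ω * diagonal lam * (O ω)ᵀ) * vecMulVec x x).trace ^ t := by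
    intro ω
    rw [htrace ω]
    exact pow_nonneg (Finset.sum_nonneg fun l _ => mul_nonneg (hlam_nonneg l) (sq_nonneg _)) t
  have hφ_le_one : ∀ ω, φ ((O ω)ᵀ.mulVec x) ≤ 1 := by
    intro ω
    have := hφ_le ((O ω)ᵀ) (hOT ω) x
    rwa [hx, one_pow] at this
  -- invariance in the unit vector
  have hinv : ∀ u : Fin d → ℝ, (∑ i, u i ^ 2) = 1 →
      ∫ ω, φ ((O ω)ᵀ.mulVec u) ∂μ = ∫ ω, φ ((O ω)ᵀ.mulVec x) ∂μ := by
    intro u hu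
    obtain ⟨R, hR, hRu⟩ := exists_orth_mulVec u x hu hx
    have hQ : (Rᵀ)ᵀ * Rᵀ = 1 := by
      rw [Matrix.transpose_transpose]
      exact mul_eq_one_comm.mp hR
    have hmap := hHaar Rᵀ hQ
    have hQO_meas : Measurable (fun ω => Rᵀ * O ω) := by
      apply measurable_pi_lambda
      intro i
      apply measurable_pi_lambda
      intro j
      simp only [Matrix.mul_apply]
      apply Finset.measurable_sum
      intro l _
      exact ((hentry l j).comp hOmeas).const_mul _
    have hφu_meas : Measurable (fun M : Matrix (Fin d) (Fin d) ℝ => φ (Mᵀ.mulVec u)) :=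
      hφmeas.comp (hmulVecT u)
    calc ∫ ω, φ ((O ω)ᵀ.mulVec u) ∂μ
        = ∫ M, φ (Mᵀ.mulVec u) ∂(Measure.map O μ) := by
          rw [integral_map (f := fun M : Matrix (Fin d) (Fin d) ℝ => φ (Mᵀ.mulVec u))
            hOmeas.aemeasurable hφu_meas.aestronglyMeasurable]
      _ = ∫ M, φ (Mᵀ.mulVec u) ∂(Measure.map (fun ω => Rᵀ * O ω) μ) := by rw [hmap]
      _ = ∫ ω, φ ((Rᵀ * O ω)ᵀ.mulVec u) ∂μ := by
          rw [integral_map (f := fun M : Matrix (Fin d) (Fin d) ℝ => φ (Mᵀ.mulVec u))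
            hQO_meas.aemeasurable hφu_meas.aestronglyMeasurable]
      _ = ∫ ω, φ ((O ω)ᵀ.mulVec x) ∂μ := by
          apply integral_congr_ae
          apply Filter.Eventually.of_forall
          intro ω
          apply congrArg φ
          rw [Matrix.transpose_mul, Matrix.transpose_transpose, ← Matrix.mulVec_mulVec, hRu]
  -- scaling
  have hscale : ∀ v : Fin d → ℝ,
      ∫ ω, φ ((O ω)ᵀ.mulVec v) ∂μ
        = (∑ i, v i ^ 2) ^ t * ∫ ω, φ ((O ω)ᵀ.mulVec x) ∂μ := by
    intro v
    by_cases hv : (∑ i, v i ^ 2) = 0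
    · have hv0 : v = 0 := by
        funext i
        have h0 := (Finset.sum_eq_zero_iff_of_nonneg
          (fun j _ => sq_nonneg (v j))).mp hv i (Finset.mem_univ i)
        have := sq_eq_zero_iff.mp h0
        simpa using this
      have hφ0 : φ (0 : Fin d → ℝ) = 0 := by
        rw [hφapp]
        simp [zero_pow htne]
      rw [hv, hv0]
      simp only [Matrix.mulVec_zero, hφ0, integral_zero]
      rw [zero_pow htne, zero_mul]
    · have hvnn : 0 ≤ ∑ i, v i ^ 2 := Finset.sum_nonneg fun i _ => sq_nonneg _
      set r : ℝ := Real.sqrt (∑ i, v i ^ 2) with hr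
      have hrpos : 0 < r := Real.sqrt_pos.mpr (lt_of_le_of_ne hvnn (Ne.symm hv))
      have hr2 : r ^ 2 = ∑ i, v i ^ 2 := Real.sq_sqrt hvnn
      set u : Fin d → ℝ := fun i => v i / r with hu
      have huu : (∑ i, u i ^ 2) = 1 := by
        have : (∑ i, u i ^ 2) = (∑ i, v i ^ 2) / r ^ 2 := by
          rw [Finset.sum_div]
          exact Finset.sum_congr rfl fun i _ => by rw [hu, div_pow]
        rw [this, ← hr2, div_self (pow_ne_zero 2 hrpos.ne')]
      have hvu : v = r • u := by
        funext i
        rw [hu]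
        simp only [Pi.smul_apply, smul_eq_mul]
        field_simp
      have hsc : ∀ ω, φ ((O ω)ᵀ.mulVec v)
          = (∑ i, v i ^ 2) ^ t * φ ((O ω)ᵀ.mulVec u) := by
        intro ω
        rw [hvu, Matrix.mulVec_smul, hφapp, hφapp]
        have hterm : ∀ l, p l * ((r • ((O ω)ᵀ.mulVec u)) l) ^ 2
            = r ^ 2 * (p l * (((O ω)ᵀ.mulVec u) l) ^ 2) := by
          intro l
          simp only [Pi.smul_apply, smul_eq_mul]
          ring
        rw [Finset.sum_congr rfl fun l _ => hterm l, ← Finset.mul_sum, mul_pow, hr2, hvu]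
      calc ∫ ω, φ ((O ω)ᵀ.mulVec v) ∂μ
          = ∫ ω, (∑ i, v i ^ 2) ^ t * φ ((O ω)ᵀ.mulVec u) ∂μ := by
            apply integral_congr_ae
            exact Filter.Eventually.of_forall fun ω => hsc ω
        _ = (∑ i, v i ^ 2) ^ t * ∫ ω, φ ((O ω)ᵀ.mulVec u) ∂μ := integral_const_mul _ _
        _ = (∑ i, v i ^ 2) ^ t * ∫ ω, φ ((O ω)ᵀ.mulVec x) ∂μ := by rw [hinv u huu]
  -- the gaussian measure
  set γ : Measure (Fin d → ℝ) := gmeas d with hγ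
  have hmono_int : ∀ (i : Fin d) (m : ℕ), Integrable (fun v : Fin d → ℝ => (v i) ^ m) γ := by
    intro i m
    have h1 := gmeas_moment_integrable (d := d) (e := fun j => if j = i then m else 0)
    refine h1.congr (Filter.Eventually.of_forall fun v => ?_)
    show (∏ j, v j ^ (if j = i then m else 0)) = v i ^ m
    rw [Finset.prod_eq_single i]
    · simp
    · intro j _ hj
      simp [hj]
    · intro h
      exact absurd (Finset.mem_univ i) h
  have hmono_val : ∀ (i : Fin d) (m : ℕ), ∫ v, (v i) ^ m ∂γ = gm m * gm 0 ^ (d - 1) := by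
    intro i m
    have h1 := gmeas_moment (d := d) (e := fun j => if j = i then m else 0)
    have h2 : (∫ v, ∏ j, (v j) ^ (if j = i then m else 0) ∂(gmeas d)) = ∫ v, (v i) ^ m ∂γ := by
      rw [hγ]
      apply integral_congr_ae
      apply Filter.Eventually.of_forall
      intro v
      show (∏ j, v j ^ (if j = i then m else 0)) = v i ^ m
      rw [Finset.prod_eq_single i]
      · simp
      · intro j _ hj
        simp [hj]
      · intro h
        exact absurd (Finset.mem_univ i) h
    rw [← h2, h1]
    rw [← Finset.mul_prod_erase Finset.univ _ (Finset.mem_univ i)]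
    simp only [if_pos rfl]
    congr 1
    have h3 : ∀ j ∈ Finset.univ.erase i, gm (if j = i then m else 0) = gm 0 := by
      intro j hj
      rw [if_neg (Finset.mem_erase.mp hj).1]
    rw [Finset.prod_congr rfl h3, Finset.prod_const,
      Finset.card_erase_of_mem (Finset.mem_univ i), Finset.card_univ, Fintype.card_fin]
  -- integrability of the norm-power
  have hHmeas : Measurable (fun v : Fin d → ℝ => (∑ i, v i ^ 2) ^ t) := by
    apply Measurable.pow_const
    exact Finset.measurable_sum _ fun i _ => (measurable_pi_apply i).pow_const 2
  have hsum_nonneg : ∀ v : Fin d → ℝ, 0 ≤ ∑ i, v i ^ 2 :=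
    fun v => Finset.sum_nonneg fun i _ => sq_nonneg _
  have hHbound : ∀ v : Fin d → ℝ,
      (∑ i, v i ^ 2) ^ t ≤ (d:ℝ) ^ (t-1) * ∑ i, (v i) ^ (2*t) := by
    intro v
    have hpm := pow_sum_div_card_le_sum_pow (s := (Finset.univ : Finset (Fin d)))
      (f := fun i => v i ^ 2) (fun i _ => sq_nonneg _) (t-1)
    rw [Nat.sub_add_cancel ht] at hpm
    have hcard : ((Finset.univ : Finset (Fin d)).card : ℝ) = (d:ℝ) := by
      rw [Finset.card_univ, Fintype.card_fin]
    rw [hcard] at hpm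
    have hdpow : (0:ℝ) < (d:ℝ) ^ (t-1) := pow_pos hdR _
    rw [div_le_iff₀ hdpow] at hpm
    calc (∑ i, v i ^ 2) ^ t ≤ (∑ i, ((v i) ^ 2) ^ t) * (d:ℝ) ^ (t-1) := hpm
      _ = (d:ℝ) ^ (t-1) * ∑ i, (v i) ^ (2*t) := by
          rw [mul_comm]
          congr 1
          apply Finset.sum_congr rfl
          intro i _
          rw [← pow_mul]
  have hHint : Integrable (fun v : Fin d → ℝ => (∑ i, v i ^ 2) ^ t) γ := by
    have hBint : Integrable (fun v : Fin d → ℝ => (d:ℝ) ^ (t-1) * ∑ i, (v i) ^ (2*t)) γ :=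
      (integrable_finset_sum _ fun i _ => hmono_int i (2*t)).const_mul _
    refine hBint.mono' hHmeas.aestronglyMeasurable ?_
    apply Filter.Eventually.of_forall
    intro v
    rw [Real.norm_eq_abs, abs_of_nonneg (pow_nonneg (hsum_nonneg v) t)]
    exact hHbound v
  have hφint : Integrable φ γ := by
    refine hHint.mono' hφmeas.aestronglyMeasurable ?_
    apply Filter.Eventually.of_forall
    intro y
    rw [Real.norm_eq_abs, abs_of_nonneg (hφ_nonneg y)]
    exact hφ_le_normpow y
  -- upper bound for ∫ φ dγ
  have hgm2t_nonneg : 0 ≤ gm (2*t) := gm_nonneg t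
  have hgm0d1 : (0:ℝ) ≤ gm 0 ^ (d-1) := pow_nonneg gm_zero_pos.le _
  have haval_le : ∫ y, φ y ∂γ ≤ (k:ℝ)^t * (t:ℝ)^t * gm 0 ^ d := by
    set S : Finset (Fin d) := Finset.univ.filter (fun l => (l:ℕ) < k) with hS
    have hcardS : (S.card : ℝ) ≤ (k:ℝ) := by
      have : S.card ≤ k := by
        have hcc := Finset.card_le_card_of_injOn (s := S)
          (t := (Finset.univ : Finset (Fin k)))
          (fun l : Fin d => (⟨(l:ℕ) % k, Nat.mod_lt _ hk⟩ : Fin k)) ?_ ?_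
        · rwa [Finset.card_univ, Fintype.card_fin] at hcc
        · intro l _
          simp
        · intro l1 hl1 l2 hl2 heq
          have h1 : (l1:ℕ) < k := (Finset.mem_filter.mp hl1).2
          have h2 : (l2:ℕ) < k := (Finset.mem_filter.mp hl2).2
          have := congrArg (fun z : Fin k => (z:ℕ)) heq
          simp only [Nat.mod_eq_of_lt h1, Nat.mod_eq_of_lt h2] at this
          exact Fin.ext this
      exact_mod_cast this
    have hφ_le_sum : ∀ y : Fin d → ℝ,
        φ y ≤ (k:ℝ)^(t-1) * ∑ l ∈ S, (y l)^(2*t) := by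
      intro y
      rw [hφapp]
      have h1 : (∑ l, p l * (y l) ^ 2) = ∑ l ∈ S, (y l) ^ 2 := by
        rw [hS, Finset.sum_filter]
        apply Finset.sum_congr rfl
        intro l _
        by_cases h : (l:ℕ) < k <;> simp [hp, h]
      rw [h1]
      by_cases hSe : S.card = 0
      · rw [Finset.card_eq_zero.mp hSe]
        simp [zero_pow htne]
      · have hScard_pos : (0:ℝ) < (S.card : ℝ) := by
          have : 0 < S.card := Nat.pos_of_ne_zero hSe
          exact_mod_cast this
        have hpm := pow_sum_div_card_le_sum_pow (s := S)
          (f := fun l => y l ^ 2) (fun l _ => sq_nonneg _) (t-1)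
        rw [Nat.sub_add_cancel ht] at hpm
        have hcpow : (0:ℝ) < (S.card:ℝ) ^ (t-1) := pow_pos hScard_pos _
        rw [div_le_iff₀ hcpow] at hpm
        calc (∑ l ∈ S, (y l) ^ 2) ^ t
            ≤ (∑ l ∈ S, ((y l) ^ 2) ^ t) * (S.card:ℝ) ^ (t-1) := hpm
          _ = (S.card:ℝ) ^ (t-1) * ∑ l ∈ S, (y l) ^ (2*t) := by
              rw [mul_comm]
              congr 1
              apply Finset.sum_congr rfl
              intro l _
              rw [← pow_mul]
          _ ≤ (k:ℝ) ^ (t-1) * ∑ l ∈ S, (y l) ^ (2*t) := by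
              apply mul_le_mul_of_nonneg_right
                (pow_le_pow_left₀ hScard_pos.le hcardS _)
              exact Finset.sum_nonneg fun l _ => by
                rw [mul_comm 2 t, pow_mul]
                exact sq_nonneg _
    have hSint : Integrable (fun y : Fin d → ℝ => (k:ℝ)^(t-1) * ∑ l ∈ S, (y l)^(2*t)) γ :=
      (integrable_finset_sum _ fun l _ => hmono_int l (2*t)).const_mul _
    calc ∫ y, φ y ∂γ
        ≤ ∫ y, (k:ℝ)^(t-1) * ∑ l ∈ S, (y l)^(2*t) ∂γ :=
          integral_mono hφint hSint hφ_le_sum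
      _ = (k:ℝ)^(t-1) * ∑ l ∈ S, (gm (2*t) * gm 0 ^ (d-1)) := by
          rw [integral_const_mul]
          congr 1
          rw [integral_finset_sum _ fun l _ => hmono_int l (2*t)]
          exact Finset.sum_congr rfl fun l _ => hmono_val l (2*t)
      _ = (k:ℝ)^(t-1) * ((S.card : ℝ) * (gm (2*t) * gm 0 ^ (d-1))) := by
          rw [Finset.sum_const, nsmul_eq_mul]
      _ ≤ (k:ℝ)^(t-1) * ((k:ℝ) * (((t:ℝ)^t * gm 0) * gm 0 ^ (d-1))) := by
          apply mul_le_mul_of_nonneg_left _ (pow_nonneg hkR.le _)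
          apply mul_le_mul hcardS
            (mul_le_mul_of_nonneg_right (gm_even_le t) hgm0d1)
            (mul_nonneg hgm2t_nonneg hgm0d1)
            hkR.le
      _ = (k:ℝ)^t * (t:ℝ)^t * gm 0 ^ d := by
          have hk' : (k:ℝ)^(t-1) * (k:ℝ) = (k:ℝ)^t := by
            rw [← pow_succ, Nat.sub_add_cancel ht]
          have hgm' : gm 0 * gm 0 ^ (d-1) = gm 0 ^ d := by
            rw [← pow_succ', Nat.sub_add_cancel hd]
          calc (k:ℝ)^(t-1) * ((k:ℝ) * (((t:ℝ)^t * gm 0) * gm 0 ^ (d-1)))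
              = ((k:ℝ)^(t-1) * (k:ℝ)) * ((t:ℝ)^t * (gm 0 * gm 0 ^ (d-1))) := by ring
            _ = (k:ℝ)^t * (t:ℝ)^t * gm 0 ^ d := by rw [hk', hgm']; ring
  -- Jensen lower bound
  have hgm0d_pos : (0:ℝ) < gm 0 ^ d := pow_pos gm_zero_pos d
  have hmass : γ.real Set.univ = gm 0 ^ d := by
    rw [measureReal_def, hγ, gmeas_univ, ENNReal.toReal_ofReal hgm0d_pos.le]
  have hSint2 : Integrable (fun v : Fin d → ℝ => ∑ i, (v i) ^ 2) γ :=
    integrable_finset_sum _ fun i _ => hmono_int i 2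
  have hSval : ∫ v, (∑ i, (v i) ^ 2) ∂γ = (d:ℝ) * gm 0 ^ d := by
    rw [integral_finset_sum _ fun i _ => hmono_int i 2]
    rw [Finset.sum_congr rfl fun i _ => hmono_val i 2]
    rw [Finset.sum_const, Finset.card_univ, Fintype.card_fin, nsmul_eq_mul, gm_two]
    rw [show gm 0 * gm 0 ^ (d-1) = gm 0 ^ d by rw [← pow_succ', Nat.sub_add_cancel hd]]
  have hjensen : ((d:ℝ)) ^ t * gm 0 ^ d ≤ ∫ v, (∑ i, v i ^ 2) ^ t ∂γ := by
    have hconv : ConvexOn ℝ (Set.Ici (0:ℝ)) (fun z : ℝ => z ^ t) := convexOn_pow t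
    have hJ := hconv.map_average_le (μ := γ) (f := fun v : Fin d → ℝ => ∑ i, v i ^ 2)
      ((continuous_pow t).continuousOn) isClosed_Ici
      (Filter.Eventually.of_forall fun v => hsum_nonneg v) hSint2 ?_
    · rw [average_eq, average_eq, hSval, hmass] at hJ
      simp only [smul_eq_mul] at hJ
      have hlhs : ((gm 0 ^ d)⁻¹ * ((d:ℝ) * gm 0 ^ d)) = (d:ℝ) := by
        field_simp
      rw [hlhs] at hJ
      have := mul_le_mul_of_nonneg_left hJ hgm0d_pos.le
      rw [← mul_assoc, mul_inv_cancel₀ hgm0d_pos.ne', one_mul] at this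
      linarith [this]
    · exact hHint
  -- Fubini
  have hjointmeas : Measurable (fun q : (Fin d → ℝ) × Ω => φ ((O q.2)ᵀ.mulVec q.1)) := by
    apply hφmeas.comp
    apply measurable_pi_lambda
    intro l
    simp only [Matrix.mulVec, dotProduct, Matrix.transpose_apply]
    apply Finset.measurable_sum
    intro i _
    exact ((hentry i l).comp (hOmeas.comp measurable_snd)).mul
      ((measurable_pi_apply i).comp measurable_fst)
  have hGbound : ∀ (v : Fin d → ℝ) (ω : Ω),
      ‖φ ((O ω)ᵀ.mulVec v)‖ ≤ (∑ i, v i ^ 2) ^ t := by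
    intro v ω
    rw [Real.norm_eq_abs, abs_of_nonneg (hφ_nonneg _)]
    exact hφ_le ((O ω)ᵀ) (hOT ω) v
  have hGω_int : ∀ v : Fin d → ℝ, Integrable (fun ω => φ ((O ω)ᵀ.mulVec v)) μ := by
    intro v
    refine (integrable_const ((∑ i, v i ^ 2) ^ t)).mono'
      (hgω v).aestronglyMeasurable ?_
    exact Filter.Eventually.of_forall fun ω => hGbound v ω
  have hGint : Integrable (fun q : (Fin d → ℝ) × Ω => φ ((O q.2)ᵀ.mulVec q.1)) (γ.prod μ) := by
    refine (integrable_prod_iff hjointmeas.aestronglyMeasurable).2 ⟨?_, ?_⟩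
    · exact Filter.Eventually.of_forall fun v => hGω_int v
    · refine hHint.mono' ?_ ?_
      · exact (hjointmeas.aestronglyMeasurable.norm).integral_prod_right'
      · apply Filter.Eventually.of_forall
        intro v
        rw [Real.norm_eq_abs, abs_of_nonneg (integral_nonneg fun ω => norm_nonneg _)]
        calc ∫ ω, ‖φ ((O ω)ᵀ.mulVec v)‖ ∂μ
            ≤ ∫ _ω, (∑ i, v i ^ 2) ^ t ∂μ := by
              apply integral_mono (hGω_int v).norm (integrable_const _)
              intro ω
              exact hGbound v ω
          _ = (∑ i, v i ^ 2) ^ t := by simp [measure_univ]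
  have hswap := integral_integral_swap (f := fun (v : Fin d → ℝ) (ω : Ω) =>
    φ ((O ω)ᵀ.mulVec v)) hGint
  set F : ℝ := ∫ ω, φ ((O ω)ᵀ.mulVec x) ∂μ with hF
  have hFnonneg : 0 ≤ F := integral_nonneg fun ω => hφ_nonneg _
  have hLHS : ∫ v, (∫ ω, φ ((O ω)ᵀ.mulVec v) ∂μ) ∂γ
      = (∫ v, (∑ i, v i ^ 2) ^ t ∂γ) * F := by
    rw [← integral_mul_const]
    apply integral_congr_ae
    exact Filter.Eventually.of_forall fun v => hscale v
  have hRHS : ∫ ω, (∫ v, φ ((O ω)ᵀ.mulVec v) ∂γ) ∂μ = ∫ y, φ y ∂γ := by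
    have hω : ∀ ω, ∫ v, φ ((O ω)ᵀ.mulVec v) ∂γ = ∫ y, φ y ∂γ := by
      intro ω
      have hmapγ := gmeas_map ((O ω)ᵀ) (hOT ω)
      calc ∫ v, φ ((O ω)ᵀ.mulVec v) ∂γ
          = ∫ y, φ y ∂(Measure.map (fun v => ((O ω)ᵀ).mulVec v) (gmeas d)) := by
            rw [hγ, integral_map (f := φ) (measurable_mulVec _).aemeasurable
              hφmeas.aestronglyMeasurable]
        _ = ∫ y, φ y ∂γ := by rw [hmapγ, hγ]
    calc ∫ ω, (∫ v, φ ((O ω)ᵀ.mulVec v) ∂γ) ∂μ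
        = ∫ _ω, (∫ y, φ y ∂γ) ∂μ := by
          apply integral_congr_ae
          exact Filter.Eventually.of_forall fun ω => hω ω
      _ = ∫ y, φ y ∂γ := by simp [measure_univ]
  have hkey : (∫ v, (∑ i, v i ^ 2) ^ t ∂γ) * F = ∫ y, φ y ∂γ := by
    rw [← hLHS, hswap, hRHS]
  -- final bound on F
  have hFle : F ≤ ((k:ℝ) * t / d) ^ t := by
    have hub : F * ((d:ℝ)^t * gm 0 ^ d) ≤ (k:ℝ)^t * (t:ℝ)^t * gm 0 ^ d := by
      calc F * ((d:ℝ)^t * gm 0 ^ d)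
          ≤ F * (∫ v, (∑ i, v i ^ 2) ^ t ∂γ) :=
            mul_le_mul_of_nonneg_left hjensen hFnonneg
        _ = ∫ y, φ y ∂γ := by rw [mul_comm]; exact hkey
        _ ≤ (k:ℝ)^t * (t:ℝ)^t * gm 0 ^ d := haval_le
    have hdt_pos : (0:ℝ) < (d:ℝ)^t := pow_pos hdR t
    have hstep : F * (d:ℝ)^t ≤ (k:ℝ)^t * (t:ℝ)^t := by
      have h1 : (F * (d:ℝ)^t) * gm 0 ^ d ≤ ((k:ℝ)^t * (t:ℝ)^t) * gm 0 ^ d := by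
        calc (F * (d:ℝ)^t) * gm 0 ^ d = F * ((d:ℝ)^t * gm 0 ^ d) := by ring
          _ ≤ (k:ℝ)^t * (t:ℝ)^t * gm 0 ^ d := hub
      exact le_of_mul_le_mul_right h1 hgm0d_pos
    rw [div_pow, mul_pow]
    rw [le_div_iff₀ hdt_pos]
    exact hstep
  -- conclude
  have hmainmeas : Measurable
      (fun ω => ((O ω * diagonal lam * (O ω)ᵀ) * vecMulVec x x).trace ^ t) := by
    have heq : (fun ω => ((O ω * diagonal lam * (O ω)ᵀ) * vecMulVec x x).trace ^ t)
        = fun ω => (∑ l, lam l * (((O ω)ᵀ.mulVec x) l) ^ 2) ^ t := by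
      funext ω
      rw [htrace ω]
    rw [heq]
    apply Measurable.pow_const
    apply Finset.measurable_sum
    intro l _
    exact (((measurable_pi_apply l).comp ((hmulVecT x).comp hOmeas)).pow_const 2).const_mul _
  have hmainint : Integrable
      (fun ω => ((O ω * diagonal lam * (O ω)ᵀ) * vecMulVec x x).trace ^ t) μ := by
    refine (integrable_const (1:ℝ)).mono' hmainmeas.aestronglyMeasurable ?_
    apply Filter.Eventually.of_forall
    intro ω
    rw [Real.norm_eq_abs, abs_of_nonneg (htrace_nonneg ω)]
    exact le_trans (hptwise ω) (hφ_le_one ω)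
  calc ∫ ω, ((O ω * diagonal lam * (O ω)ᵀ) * vecMulVec x x).trace ^ t ∂μ
      ≤ ∫ ω, φ ((O ω)ᵀ.mulVec x) ∂μ := by
        apply integral_mono hmainint ?_ hptwise
        refine (integrable_const (1:ℝ)).mono' (hgω x).aestronglyMeasurable ?_
        apply Filter.Eventually.of_forall
        intro ω
        rw [Real.norm_eq_abs, abs_of_nonneg (hφ_nonneg _)]
        exact hφ_le_one ω
    _ ≤ ((k:ℝ) * t / d) ^ t := hFle
end
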